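/- arXiv:1212.2893 — 7 statements merged into one kernel-verified Lean document; each statement's English description precedes it below -/
import Mathlib

section
/- (Proposition 1(a), necessary condition for finite population learning.) Under the learning setup, if (1/n)·∑_{i=1}^n erf(ε·√((ρ + ρ̄·k_i)/2)) < (1 − ε̄)·(1 − δ), then (ε, ε̄, δ)-learning does not occur; in fact P({ω : (1/n)·|{i : ω ∉ A_i}| ≥ ε̄}) > δ. -/
open MeasureTheory Filter
open scoped Classical

/-- The error function `erf x = (2/√π) ∫₀ˣ e^{-t²} dt`. -/
noncomputable def erf (x : ℝ) : ℝ :=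
  (2 / Real.sqrt Real.pi) * ∫ t in (0:ℝ)..x, Real.exp (-t ^ 2)

lemma erf_nonneg {x : ℝ} (hx : 0 ≤ x) : 0 ≤ erf x := by
  have h1 : (0:ℝ) ≤ 2 / Real.sqrt Real.pi := by positivity
  have h2 : (0:ℝ) ≤ ∫ t in (0:ℝ)..x, Real.exp (-t ^ 2) :=
    intervalIntegral.integral_nonneg hx (fun t _ => (Real.exp_pos _).le)
  exact mul_nonneg h1 h2

/-- Proposition 1(a): necessary condition for finite population learning.
If the average of `erf (ε √((ρ + ρ̄ kᵢ)/2))` is below `(1-ε̄)(1-δ)`, then the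
probability that at least a fraction `ε̄` of agents err is strictly larger
than `δ`, i.e. `(ε, ε̄, δ)`-learning fails. -/
theorem stmt_1 (n : ℕ) (hn : 1 ≤ n) (ε εbar δ ρ ρbar : ℝ)
    (hε : 0 < ε) (hεbar : εbar ∈ Set.Ioo (0:ℝ) 1) (hδ : δ ∈ Set.Ioo (0:ℝ) 1)
    (hρ : 0 < ρ) (hρbar : 0 < ρbar)
    (k : Fin n → ℕ) (hk : ∀ i, 1 ≤ k i)
    {Ω : Type*} [MeasurableSpace Ω] (P : Measure Ω) [IsProbabilityMeasure P]
    (A : Fin n → Set Ω) (hmA : ∀ i, MeasurableSet (A i))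
    (hPA : ∀ i, P (A i) = ENNReal.ofReal (erf (ε * Real.sqrt ((ρ + ρbar * k i) / 2))))
    (hcond : (1 / n : ℝ) * ∑ i, erf (ε * Real.sqrt ((ρ + ρbar * k i) / 2))
        < (1 - εbar) * (1 - δ)) :
    ENNReal.ofReal δ <
      P {ω | εbar ≤ (1 / n : ℝ) * ((Finset.univ.filter fun i => ω ∉ A i).card : ℝ)} := by
  by_contra hcon
  push_neg at hcon
  have hnR : (0:ℝ) < n := by exact_mod_cast hn
  set p : Fin n → ℝ := fun i => erf (ε * Real.sqrt ((ρ + ρbar * k i) / 2)) with hp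
  have hp0 : ∀ i, 0 ≤ p i := fun i => erf_nonneg (by positivity)
  set B : Set Ω :=
    {ω | εbar ≤ (1 / n : ℝ) * ((Finset.univ.filter fun i => ω ∉ A i).card : ℝ)} with hB
  -- measurability of B
  have hg : Measurable (fun ω => ((Finset.univ.filter fun i => ω ∉ A i).card : ℝ)) := by
    have : (fun ω => ((Finset.univ.filter fun i => ω ∉ A i).card : ℝ))
        = fun ω => ∑ i : Fin n, if ω ∈ (A i)ᶜ then (1:ℝ) else 0 := by
      funext ω
      rw [Finset.card_filter]
      push_cast
      rfl
    rw [this]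
    exact Finset.measurable_sum _ fun i _ =>
      Measurable.ite (hmA i).compl measurable_const measurable_const
  have hmB : MeasurableSet B :=
    measurableSet_le measurable_const (measurable_const.mul hg)
  -- P Bᶜ ≥ 1 - δ
  have hPBc : ENNReal.ofReal (1 - δ) ≤ P Bᶜ := by
    rw [prob_compl_eq_one_sub hmB]
    calc ENNReal.ofReal (1 - δ) = 1 - ENNReal.ofReal δ := by
          rw [ENNReal.ofReal_sub _ hδ.1.le, ENNReal.ofReal_one]
      _ ≤ 1 - P B := tsub_le_tsub_left hcon 1
  -- sum of measures as a lintegral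
  have hsum : ∑ i, P (A i) = ∫⁻ ω, (∑ i, (A i).indicator 1 ω) ∂P := by
    rw [lintegral_finset_sum _ (fun i _ => (measurable_one.indicator (hmA i)))]
    simp_rw [lintegral_indicator_one (hmA _)]
  -- pointwise lower bound on Bᶜ
  have hpt : ∀ ω ∈ Bᶜ,
      ENNReal.ofReal (n * (1 - εbar)) ≤ ∑ i, (A i).indicator 1 ω := by
    intro ω hω
    have hω' : ((Finset.univ.filter fun i => ω ∉ A i).card : ℝ) < εbar * n := by
      simp only [Set.mem_compl_iff, hB, Set.mem_setOf_eq, not_le] at hω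
      have := (div_lt_iff₀ hnR).mp (by rwa [one_div, inv_mul_eq_div] at hω)
      linarith
    have hcards : (Finset.univ.filter fun i => ω ∈ A i).card
        + (Finset.univ.filter fun i => ω ∉ A i).card = n := by
      rw [Finset.card_filter_add_card_filter_not]
      simp
    have hsucc : n * (1 - εbar) ≤ ((Finset.univ.filter fun i => ω ∈ A i).card : ℝ) := by
      have : ((Finset.univ.filter fun i => ω ∈ A i).card : ℝ)
          = n - ((Finset.univ.filter fun i => ω ∉ A i).card : ℝ) := by
        have := hcards
        push_cast [← this]
        ring
      rw [this]; nlinarith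
    have hind : ∑ i, (A i).indicator (1 : Ω → ENNReal) ω
        = ((Finset.univ.filter fun i => ω ∈ A i).card : ENNReal) := by
      rw [Finset.card_filter]
      push_cast
      refine Finset.sum_congr rfl fun i _ => ?_
      by_cases h : ω ∈ A i <;> simp [Set.indicator_apply, h]
    rw [hind]
    calc ENNReal.ofReal (n * (1 - εbar))
        ≤ ENNReal.ofReal ((Finset.univ.filter fun i => ω ∈ A i).card : ℝ) :=
          ENNReal.ofReal_le_ofReal hsucc
      _ = _ := ENNReal.ofReal_natCast _
  -- lower bound the lintegral
  have hlow : ENNReal.ofReal (n * (1 - εbar)) * ENNReal.ofReal (1 - δ)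
      ≤ ∫⁻ ω, (∑ i, (A i).indicator 1 ω) ∂P := by
    calc ENNReal.ofReal (n * (1 - εbar)) * ENNReal.ofReal (1 - δ)
        ≤ ENNReal.ofReal (n * (1 - εbar)) * P Bᶜ := by
          exact mul_le_mul_right hPBc _
      _ = ∫⁻ _ in Bᶜ, ENNReal.ofReal (n * (1 - εbar)) ∂P := by
          rw [setLIntegral_const]
      _ ≤ ∫⁻ ω in Bᶜ, (∑ i, (A i).indicator 1 ω) ∂P :=
          setLIntegral_mono (Finset.measurable_sum _ fun i _ =>
            measurable_one.indicator (hmA i)) hpt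
      _ ≤ ∫⁻ ω, (∑ i, (A i).indicator 1 ω) ∂P := setLIntegral_le_lintegral _ _
  -- convert to reals
  have hsum' : ∑ i, P (A i) = ENNReal.ofReal (∑ i, p i) := by
    rw [ENNReal.ofReal_sum_of_nonneg (fun i _ => hp0 i)]
    exact Finset.sum_congr rfl fun i _ => hPA i
  have hkey : ENNReal.ofReal (n * (1 - εbar) * (1 - δ)) ≤ ENNReal.ofReal (∑ i, p i) := by
    rw [ENNReal.ofReal_mul (by nlinarith [hεbar.2] : (0:ℝ) ≤ n * (1 - εbar))]
    rw [← hsum', hsum]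
    exact hlow
  have hreal : n * (1 - εbar) * (1 - δ) ≤ ∑ i, p i := by
    have := (ENNReal.ofReal_le_ofReal_iff (Finset.sum_nonneg fun i _ => hp0 i)).mp hkey
    exact this
  have : (1 - εbar) * (1 - δ) ≤ (1 / n : ℝ) * ∑ i, p i := by
    rw [one_div, inv_mul_eq_div, le_div_iff₀ hnR]
    nlinarith
  exact absurd hcond (not_lt.mpr this)
end

section
/- (Proposition 1(b), sufficient condition for finite population learning.) Under the learning setup, if (1/n)·∑_{i=1}^n erf(ε·√((ρ + ρ̄·k_i)/2)) ≥ 1 − ε̄·δ, then (ε, ε̄, δ)-learning occurs, i.e. P({ω : (1/n)·|{i : ω ∉ A_i}| ≥ ε̄}) ≤ δ. -/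
open MeasureTheory Filter
open scoped Classical

/-- Proposition 1(b): sufficient condition for finite population learning.
If the average of `erf (ε √((ρ + ρ̄ kᵢ)/2))` is at least `1 - ε̄ δ`, then the
probability that at least a fraction `ε̄` of agents err is at most `δ`,
i.e. `(ε, ε̄, δ)`-learning occurs. -/
theorem stmt_2 (n : ℕ) (hn : 1 ≤ n) (ε εbar δ ρ ρbar : ℝ)
    (hε : 0 < ε) (hεbar : εbar ∈ Set.Ioo (0:ℝ) 1) (hδ : δ ∈ Set.Ioo (0:ℝ) 1)
    (hρ : 0 < ρ) (hρbar : 0 < ρbar)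
    (k : Fin n → ℕ) (hk : ∀ i, 1 ≤ k i)
    {Ω : Type*} [MeasurableSpace Ω] (P : Measure Ω) [IsProbabilityMeasure P]
    (A : Fin n → Set Ω) (hmA : ∀ i, MeasurableSet (A i))
    (hPA : ∀ i, P (A i) = ENNReal.ofReal (erf (ε * Real.sqrt ((ρ + ρbar * k i) / 2))))
    (hcond : 1 - εbar * δ ≤
        (1 / n : ℝ) * ∑ i, erf (ε * Real.sqrt ((ρ + ρbar * k i) / 2))) :
    P {ω | εbar ≤ (1 / n : ℝ) * ((Finset.univ.filter fun i => ω ∉ A i).card : ℝ)}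
      ≤ ENNReal.ofReal δ := by
  obtain ⟨hεb0, hεb1⟩ := hεbar
  obtain ⟨hδ0, hδ1⟩ := hδ
  have hn0 : (0:ℝ) < n := by exact_mod_cast hn
  set f : Fin n → ℝ := fun i => erf (ε * Real.sqrt ((ρ + ρbar * k i) / 2)) with hf
  have hf0 : ∀ i, 0 ≤ f i := by
    intro i
    apply erf_nonneg
    positivity
  have hf1 : ∀ i, f i ≤ 1 := by
    intro i
    have h := (hPA i).symm.trans_le (prob_le_one (μ := P) (s := A i))
    rw [ENNReal.ofReal_le_one] at h
    exact h
  set S : Set Ω := {ω | εbar ≤ (1 / n : ℝ) * ((Finset.univ.filter fun i => ω ∉ A i).card : ℝ)}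
  set g : Ω → ENNReal := fun ω => ∑ i, Set.indicator (A i)ᶜ (fun _ => 1) ω with hg
  have hgmeas : Measurable g := by
    apply Finset.measurable_sum
    intro i _
    exact (measurable_one.indicator (hmA i).compl)
  have hgcard : ∀ ω, g ω = ((Finset.univ.filter fun i => ω ∉ A i).card : ENNReal) := by
    intro ω
    rw [hg, Finset.card_filter]
    push_cast
    apply Finset.sum_congr rfl
    intro i _
    by_cases h : ω ∈ A i <;> simp [Set.indicator, h]
  -- Step 1: ofReal (εbar * n) * P S ≤ ∫⁻ g
  have step1 : ENNReal.ofReal (εbar * n) * P S ≤ ∫⁻ ω, g ω ∂P := by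
    calc ENNReal.ofReal (εbar * n) * P S
        = ∫⁻ _ in S, ENNReal.ofReal (εbar * n) ∂P := by
          rw [setLIntegral_const]
      _ ≤ ∫⁻ ω in S, g ω ∂P := by
          apply setLIntegral_mono hgmeas
          intro ω hω
          have hωS : εbar ≤ (1 / n : ℝ) * ((Finset.univ.filter fun i => ω ∉ A i).card : ℝ) := hω
          have : εbar * n ≤ ((Finset.univ.filter fun i => ω ∉ A i).card : ℝ) := by
            rw [one_div, inv_mul_eq_div, le_div_iff₀ hn0] at hωS
            exact hωS
          rw [hgcard]
          calc ENNReal.ofReal (εbar * n)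
              ≤ ENNReal.ofReal ((Finset.univ.filter fun i => ω ∉ A i).card : ℝ) :=
                ENNReal.ofReal_le_ofReal this
            _ = ((Finset.univ.filter fun i => ω ∉ A i).card : ENNReal) := by
                rw [ENNReal.ofReal_natCast]
      _ ≤ ∫⁻ ω, g ω ∂P := setLIntegral_le_lintegral _ _
  -- Step 2: ∫⁻ g = ∑ P (A i)ᶜ
  have step2 : ∫⁻ ω, g ω ∂P = ∑ i, P (A i)ᶜ := by
    rw [hg, lintegral_finset_sum]
    · apply Finset.sum_congr rfl
      intro i _
      rw [lintegral_indicator (hmA i).compl]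
      simp
    · intro i _
      exact measurable_one.indicator (hmA i).compl
  -- Step 3: ∑ P (A i)ᶜ ≤ ofReal (εbar * n * δ)
  have step3 : ∑ i, P (A i)ᶜ ≤ ENNReal.ofReal (εbar * n * δ) := by
    have hcompl : ∀ i, P (A i)ᶜ = ENNReal.ofReal (1 - f i) := by
      intro i
      rw [prob_compl_eq_one_sub (hmA i), hPA i]
      rw [← ENNReal.ofReal_one, ← ENNReal.ofReal_sub _ (hf0 i)]
    calc ∑ i, P (A i)ᶜ = ENNReal.ofReal (∑ i, (1 - f i)) := by
          rw [ENNReal.ofReal_sum_of_nonneg (fun i _ => by linarith [hf1 i])]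
          exact Finset.sum_congr rfl fun i _ => hcompl i
      _ ≤ ENNReal.ofReal (εbar * n * δ) := by
          apply ENNReal.ofReal_le_ofReal
          have hsum : (n : ℝ) * (1 - εbar * δ) ≤ ∑ i, f i := by
            rw [one_div, inv_mul_eq_div, le_div_iff₀' hn0] at hcond
            exact hcond
          have : ∑ i, (1 - f i) = (n : ℝ) - ∑ i, f i := by
            rw [Finset.sum_sub_distrib]
            simp
          rw [this]
          nlinarith
  -- Combine
  have key : ENNReal.ofReal (εbar * n) * P S ≤ ENNReal.ofReal (εbar * n) * ENNReal.ofReal δ := by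
    calc ENNReal.ofReal (εbar * n) * P S ≤ ENNReal.ofReal (εbar * n * δ) :=
          step1.trans (step2.le.trans step3)
      _ = ENNReal.ofReal (εbar * n) * ENNReal.ofReal δ := by
          rw [← ENNReal.ofReal_mul (by positivity)]
  have hpos : ENNReal.ofReal (εbar * n) ≠ 0 := by
    simp [ENNReal.ofReal_eq_zero]
    positivity
  exact (ENNReal.mul_le_mul_iff_right hpos ENNReal.ofReal_ne_top).mp key
end

section
/- (Corollary 1(a).) Under the learning setup, assume additionally that k_i ≤ n for every agent i. If erf(ε·√((ρ + ρ̄·n)/2)) < (1 − ε̄)·(1 − δ), then (ε, ε̄, δ)-learning does not occur; in fact P({ω : (1/n)·|{i : ω ∉ A_i}| ≥ ε̄}) > δ. -/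
open MeasureTheory Filter
open scoped ENNReal
open scoped Classical

lemma erf_mono_aux {a b : ℝ} (hab : a ≤ b) : erf a ≤ erf b := by
  unfold erf
  have hint : ∀ u v : ℝ, IntervalIntegrable (fun t => Real.exp (-t ^ 2)) volume u v :=
    fun u v => (Real.continuous_exp.comp (by continuity)).intervalIntegrable u v
  have h1 : (∫ t in (0:ℝ)..b, Real.exp (-t ^ 2))
      = (∫ t in (0:ℝ)..a, Real.exp (-t ^ 2)) + ∫ t in a..b, Real.exp (-t ^ 2) :=
    (intervalIntegral.integral_add_adjacent_intervals (hint 0 a) (hint a b)).symm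
  have h2 : 0 ≤ ∫ t in a..b, Real.exp (-t ^ 2) :=
    intervalIntegral.integral_nonneg hab (fun t _ => (Real.exp_pos _).le)
  have h3 : 0 ≤ 2 / Real.sqrt Real.pi := by positivity
  nlinarith

lemma erf_nonneg_aux {a : ℝ} (ha : 0 ≤ a) : 0 ≤ erf a := by
  unfold erf
  have h2 : 0 ≤ ∫ t in (0:ℝ)..a, Real.exp (-t ^ 2) :=
    intervalIntegral.integral_nonneg ha (fun t _ => (Real.exp_pos _).le)
  positivity

/-- Corollary 1(a): if `erf (ε √((ρ + ρ̄ n)/2)) < (1-ε̄)(1-δ)` and every agent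
obtains at most `n` signals, then `(ε, ε̄, δ)`-learning fails:
the probability that at least a fraction `ε̄` of agents err exceeds `δ`. -/
theorem stmt_3 (n : ℕ) (hn : 1 ≤ n) (ε εbar δ ρ ρbar : ℝ)
    (hε : 0 < ε) (hεbar : εbar ∈ Set.Ioo (0:ℝ) 1) (hδ : δ ∈ Set.Ioo (0:ℝ) 1)
    (hρ : 0 < ρ) (hρbar : 0 < ρbar)
    (k : Fin n → ℕ) (hk : ∀ i, 1 ≤ k i) (hkn : ∀ i, k i ≤ n)
    {Ω : Type*} [MeasurableSpace Ω] (P : Measure Ω) [IsProbabilityMeasure P]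
    (A : Fin n → Set Ω) (hmA : ∀ i, MeasurableSet (A i))
    (hPA : ∀ i, P (A i) = ENNReal.ofReal (erf (ε * Real.sqrt ((ρ + ρbar * k i) / 2))))
    (hcond : erf (ε * Real.sqrt ((ρ + ρbar * n) / 2)) < (1 - εbar) * (1 - δ)) :
    ENNReal.ofReal δ <
      P {ω | εbar ≤ (1 / n : ℝ) * ((Finset.univ.filter fun i => ω ∉ A i).card : ℝ)} := by
  obtain ⟨hεb0, hεb1⟩ := hεbar
  obtain ⟨hδ0, hδ1⟩ := hδ
  have hn0 : (0:ℝ) < n := by exact_mod_cast hn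
  set c : ℝ := erf (ε * Real.sqrt ((ρ + ρbar * n) / 2)) with hc
  have hc0 : 0 ≤ c := erf_nonneg_aux (by positivity)
  -- each P (A i) ≤ ofReal c
  have hPAc : ∀ i, P (A i) ≤ ENNReal.ofReal c := by
    intro i
    rw [hPA i]
    apply ENNReal.ofReal_le_ofReal
    apply erf_mono_aux
    have hki : (k i : ℝ) ≤ (n : ℝ) := by exact_mod_cast hkn i
    have : Real.sqrt ((ρ + ρbar * k i) / 2) ≤ Real.sqrt ((ρ + ρbar * n) / 2) := by
      apply Real.sqrt_le_sqrt; nlinarith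
    nlinarith [Real.sqrt_nonneg ((ρ + ρbar * k i) / 2)]
  -- the bad set B and its complement
  set B : Set Ω := {ω | εbar ≤ (1 / n : ℝ) * ((Finset.univ.filter fun i => ω ∉ A i).card : ℝ)}
    with hB
  have hmB : MeasurableSet B := by
    have hcard : Measurable fun ω => ((Finset.univ.filter fun i => ω ∉ A i).card : ℝ) := by
      have : ∀ ω, ((Finset.univ.filter fun i => ω ∉ A i).card : ℝ)
          = ∑ i : Fin n, if ω ∈ A i then (0:ℝ) else 1 := by
        intro ω
        rw [Finset.card_filter]
        push_cast
        exact Finset.sum_congr rfl fun i _ => by by_cases h : ω ∈ A i <;> simp [h]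
      simp only [this]
      exact Finset.measurable_sum _ fun i _ =>
        Measurable.ite (hmA i) measurable_const measurable_const
    exact measurableSet_le measurable_const (measurable_const.mul hcard)
  set r : ℝ := n * (1 - εbar) with hr
  have hr0 : 0 < r := by rw [hr]; nlinarith
  set m : ℕ := ⌊r⌋₊ + 1 with hm
  have hrm : r < m := by rw [hm]; push_cast; exact Nat.lt_floor_add_one r
  -- on Bᶜ, the number of correct agents is at least m
  have hcount : ∀ ω ∈ Bᶜ, (m : ℝ≥0∞) ≤ ∑ i : Fin n, (A i).indicator (1 : Ω → ℝ≥0∞) ω := by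
    intro ω hω
    have hωB : ¬ εbar ≤ (1 / n : ℝ) * ((Finset.univ.filter fun i => ω ∉ A i).card : ℝ) := hω
    push_neg at hωB
    set e := (Finset.univ.filter fun i => ω ∉ A i).card with he
    set g := (Finset.univ.filter fun i => ω ∈ A i).card with hg
    have hsplit : g + e = n := by
      have := Finset.card_filter_add_card_filter_not (s := (Finset.univ : Finset (Fin n)))
        (p := fun i => ω ∈ A i)
      simpa [hg, he, Finset.card_univ] using this
    have he' : (e : ℝ) < n * εbar := by
      have := (div_lt_iff₀ hn0).mp (by rw [div_eq_inv_mul, ← one_div]; exact hωB)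
      linarith
    have hgr : r < (g : ℝ) := by
      have : (g : ℝ) = n - e := by
        have : (g : ℝ) + e = n := by exact_mod_cast hsplit
        linarith
      rw [this, hr]; nlinarith
    have hmg : m ≤ g := by
      have : (⌊r⌋₊ : ℝ) < g := lt_of_le_of_lt (Nat.floor_le hr0.le) hgr
      have : ⌊r⌋₊ < g := by exact_mod_cast this
      omega
    have hsum : ∑ i : Fin n, (A i).indicator (1 : Ω → ℝ≥0∞) ω = (g : ℝ≥0∞) := by
      rw [hg, Finset.card_filter]
      push_cast
      exact Finset.sum_congr rfl fun i _ => by by_cases h : ω ∈ A i <;> simp [h, Set.indicator]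
    rw [hsum]
    exact_mod_cast Nat.cast_le.mpr hmg
  -- Markov-type bound: m * P Bᶜ ≤ ∑ P (A i)
  have hmarkov : (m : ℝ≥0∞) * P Bᶜ ≤ ∑ i : Fin n, P (A i) := by
    have hmeas : ∀ i : Fin n, Measurable ((A i).indicator (1 : Ω → ℝ≥0∞)) :=
      fun i => measurable_const.indicator (hmA i)
    calc (m : ℝ≥0∞) * P Bᶜ
        = ∫⁻ _ in Bᶜ, (m : ℝ≥0∞) ∂P := by
          rw [MeasureTheory.setLIntegral_const]
      _ ≤ ∫⁻ ω in Bᶜ, ∑ i : Fin n, (A i).indicator (1 : Ω → ℝ≥0∞) ω ∂P := by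
          apply MeasureTheory.setLIntegral_mono
            (Finset.measurable_sum _ fun i _ => hmeas i) hcount
      _ ≤ ∫⁻ ω, ∑ i : Fin n, (A i).indicator (1 : Ω → ℝ≥0∞) ω ∂P :=
          MeasureTheory.setLIntegral_le_lintegral _ _
      _ = ∑ i : Fin n, P (A i) := by
          rw [MeasureTheory.lintegral_finset_sum _ fun i _ => hmeas i]
          exact Finset.sum_congr rfl fun i _ =>
            MeasureTheory.lintegral_indicator_one (hmA i)
  have hsumle : ∑ i : Fin n, P (A i) ≤ (n : ℝ≥0∞) * ENNReal.ofReal c := by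
    calc ∑ i : Fin n, P (A i) ≤ ∑ _i : Fin n, ENNReal.ofReal c :=
        Finset.sum_le_sum fun i _ => hPAc i
      _ = (n : ℝ≥0∞) * ENNReal.ofReal c := by
        simp [Finset.sum_const, nsmul_eq_mul]
  -- key real inequality: n * c < m * (1 - δ)
  have hkey : (n : ℝ) * c < m * (1 - δ) := by
    have h1 : (n : ℝ) * c < r * (1 - δ) := by rw [hr]; nlinarith
    have h2 : r * (1 - δ) ≤ m * (1 - δ) := by nlinarith
    linarith
  have hPBc : P Bᶜ < ENNReal.ofReal (1 - δ) := by
    have hchain : (m : ℝ≥0∞) * P Bᶜ < (m : ℝ≥0∞) * ENNReal.ofReal (1 - δ) := by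
      calc (m : ℝ≥0∞) * P Bᶜ ≤ (n : ℝ≥0∞) * ENNReal.ofReal c := hmarkov.trans hsumle
        _ = ENNReal.ofReal (n * c) := by
            rw [ENNReal.ofReal_mul (by positivity)]
            simp [ENNReal.ofReal_natCast]
        _ < ENNReal.ofReal (m * (1 - δ)) := by
            apply ENNReal.ofReal_lt_ofReal_iff_of_nonneg (by positivity) |>.mpr hkey
        _ = (m : ℝ≥0∞) * ENNReal.ofReal (1 - δ) := by
            rw [ENNReal.ofReal_mul (by positivity)]
            simp [ENNReal.ofReal_natCast]
    have hm0 : (m : ℝ≥0∞) ≠ 0 := by simp [hm]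
    have hmtop : (m : ℝ≥0∞) ≠ ⊤ := ENNReal.natCast_ne_top m
    exact lt_of_mul_lt_mul_left' hchain
  -- conclude
  have hcompl : P B = 1 - P Bᶜ := by
    rw [measure_compl hmB (measure_ne_top P B)]
    rw [measure_univ]
    rw [ENNReal.sub_sub_cancel (by simp) (prob_le_one)]
  have hBcreal : (P Bᶜ).toReal < 1 - δ := by
    rw [← ENNReal.ofReal_toReal (measure_ne_top P Bᶜ)] at hPBc
    exact (ENNReal.ofReal_lt_ofReal_iff (by linarith)).mp hPBc
  have hBreal : δ < (P B).toReal := by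
    rw [hcompl, ENNReal.toReal_sub_of_le (prob_le_one) (by simp)]
    simp only [ENNReal.toReal_one]
    linarith
  calc ENNReal.ofReal δ < ENNReal.ofReal (P B).toReal :=
      (ENNReal.ofReal_lt_ofReal_iff_of_nonneg hδ0.le).mpr hBreal
    _ = P B := ENNReal.ofReal_toReal (measure_ne_top P B)
end

section
/- (Corollary 1(b).) Under the learning setup, if erf(ε·√((ρ + ρ̄)/2)) ≥ 1 − ε̄·δ, then (ε, ε̄, δ)-learning occurs, i.e. P({ω : (1/n)·|{i : ω ∉ A_i}| ≥ ε̄}) ≤ δ, regardless of the values k_i ≥ 1. -/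
open MeasureTheory Filter
open scoped Classical

lemma erf_mono {y x : ℝ} (hy : 0 ≤ y) (h : y ≤ x) : erf y ≤ erf x := by
  unfold erf
  have hc : ∀ a b : ℝ, IntervalIntegrable (fun t => Real.exp (-t ^ 2)) MeasureTheory.volume a b :=
    fun a b => (Real.continuous_exp.comp (by continuity)).intervalIntegrable a b
  apply mul_le_mul_of_nonneg_left _ (by positivity)
  exact intervalIntegral.integral_mono_interval le_rfl hy h
    (Filter.Eventually.of_forall fun t => (Real.exp_pos _).le) (hc 0 x)

/-- Corollary 1(b): if `erf (ε √((ρ + ρ̄)/2)) ≥ 1 - ε̄ δ`, then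
`(ε, ε̄, δ)`-learning occurs regardless of the values `kᵢ ≥ 1`. -/
theorem stmt_4 (n : ℕ) (hn : 1 ≤ n) (ε εbar δ ρ ρbar : ℝ)
    (hε : 0 < ε) (hεbar : εbar ∈ Set.Ioo (0:ℝ) 1) (hδ : δ ∈ Set.Ioo (0:ℝ) 1)
    (hρ : 0 < ρ) (hρbar : 0 < ρbar)
    (k : Fin n → ℕ) (hk : ∀ i, 1 ≤ k i)
    {Ω : Type*} [MeasurableSpace Ω] (P : Measure Ω) [IsProbabilityMeasure P]
    (A : Fin n → Set Ω) (hmA : ∀ i, MeasurableSet (A i))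
    (hPA : ∀ i, P (A i) = ENNReal.ofReal (erf (ε * Real.sqrt ((ρ + ρbar * k i) / 2))))
    (hcond : 1 - εbar * δ ≤ erf (ε * Real.sqrt ((ρ + ρbar) / 2))) :
    P {ω | εbar ≤ (1 / n : ℝ) * ((Finset.univ.filter fun i => ω ∉ A i).card : ℝ)}
      ≤ ENNReal.ofReal δ := by
  obtain ⟨hεb0, hεb1⟩ := hεbar
  obtain ⟨hδ0, hδ1⟩ := hδ
  have hεδ0 : 0 < εbar * δ := by positivity
  have hεδ1 : εbar * δ < 1 := by nlinarith
  have hn0 : (0:ℝ) < n := by exact_mod_cast hn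
  -- each failure probability is small
  have hPAc : ∀ i, P (A i)ᶜ ≤ ENNReal.ofReal (εbar * δ) := by
    intro i
    have hki : (1:ℝ) ≤ (k i : ℝ) := by exact_mod_cast hk i
    have harg : ε * Real.sqrt ((ρ + ρbar) / 2) ≤ ε * Real.sqrt ((ρ + ρbar * k i) / 2) := by
      apply mul_le_mul_of_nonneg_left _ hε.le
      apply Real.sqrt_le_sqrt
      nlinarith
    have hargnn : 0 ≤ ε * Real.sqrt ((ρ + ρbar) / 2) := by positivity
    have herf : 1 - εbar * δ ≤ erf (ε * Real.sqrt ((ρ + ρbar * k i) / 2)) :=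
      le_trans hcond (erf_mono hargnn harg)
    have h1 : P (A i)ᶜ = 1 - P (A i) := prob_compl_eq_one_sub (hmA i)
    rw [h1, hPA i]
    have : (1 : ENNReal) - ENNReal.ofReal (erf (ε * Real.sqrt ((ρ + ρbar * k i) / 2)))
        ≤ 1 - ENNReal.ofReal (1 - εbar * δ) :=
      tsub_le_tsub_left (ENNReal.ofReal_le_ofReal herf) 1
    refine this.trans ?_
    rw [← ENNReal.ofReal_one, ← ENNReal.ofReal_sub _ (by linarith)]
    apply ENNReal.ofReal_le_ofReal; linarith
  -- the counting function
  set g : Ω → ENNReal := fun ω => ∑ i : Fin n, (A i)ᶜ.indicator 1 ω with hg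
  have hgm : Measurable g :=
    Finset.measurable_sum _ fun i _ => (measurable_one.indicator (hmA i).compl)
  have hgint : ∫⁻ ω, g ω ∂P = ∑ i : Fin n, P (A i)ᶜ := by
    rw [lintegral_finset_sum _ fun i _ => (measurable_one.indicator (hmA i).compl)]
    congr 1; ext i
    exact lintegral_indicator_one (hmA i).compl
  set S := {ω | εbar ≤ (1 / n : ℝ) * ((Finset.univ.filter fun i => ω ∉ A i).card : ℝ)} with hS
  have hgS : ∀ ω ∈ S, ENNReal.ofReal (εbar * n) ≤ g ω := by
    intro ω hω
    have hcard : εbar * n ≤ ((Finset.univ.filter fun i => ω ∉ A i).card : ℝ) := by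
      have := hω
      rw [hS, Set.mem_setOf_eq] at this
      calc εbar * n ≤ ((1 / n : ℝ) * ((Finset.univ.filter fun i => ω ∉ A i).card : ℝ)) * n := by
            exact mul_le_mul_of_nonneg_right this hn0.le
        _ = ((Finset.univ.filter fun i => ω ∉ A i).card : ℝ) := by
            field_simp
    have hgω : g ω = ((Finset.univ.filter fun i => ω ∉ A i).card : ENNReal) := by
      rw [hg]
      simp only [Set.indicator_apply, Set.mem_compl_iff, Pi.one_apply]
      rw [Finset.card_filter]
      push_cast
      congr 1
    rw [hgω]
    calc ENNReal.ofReal (εbar * n) ≤ ENNReal.ofReal ((Finset.univ.filter fun i => ω ∉ A i).card : ℝ) :=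
          ENNReal.ofReal_le_ofReal hcard
      _ = _ := by simp [ENNReal.ofReal_natCast]
  have hmarkov : ENNReal.ofReal (εbar * n) * P S ≤ ∑ i : Fin n, P (A i)ᶜ := by
    rw [← hgint]
    calc ENNReal.ofReal (εbar * n) * P S = ∫⁻ _ in S, ENNReal.ofReal (εbar * n) ∂P := by
          rw [setLIntegral_const]
      _ ≤ ∫⁻ ω in S, g ω ∂P := setLIntegral_mono hgm hgS
      _ ≤ ∫⁻ ω, g ω ∂P := setLIntegral_le_lintegral _ _
  have hsum : ∑ i : Fin n, P (A i)ᶜ ≤ ENNReal.ofReal (εbar * n) * ENNReal.ofReal δ := by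
    calc ∑ i : Fin n, P (A i)ᶜ ≤ ∑ _i : Fin n, ENNReal.ofReal (εbar * δ) :=
          Finset.sum_le_sum fun i _ => hPAc i
      _ = n * ENNReal.ofReal (εbar * δ) := by simp [Finset.sum_const, mul_comm]
      _ = ENNReal.ofReal (εbar * n) * ENNReal.ofReal δ := by
          rw [← ENNReal.ofReal_mul (by positivity), ← ENNReal.ofReal_natCast n,
            ← ENNReal.ofReal_mul (by positivity)]
          congr 1; ring
  have hkey : ENNReal.ofReal (εbar * n) * P S ≤ ENNReal.ofReal (εbar * n) * ENNReal.ofReal δ :=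
    hmarkov.trans hsum
  have hne0 : ENNReal.ofReal (εbar * n) ≠ 0 := by
    simp [ENNReal.ofReal_eq_zero]; positivity
  exact (ENNReal.mul_le_mul_iff_right hne0 ENNReal.ofReal_ne_top).mp hkey
end

section
/- (Lemma 1, existence of pure-strategy Nash equilibrium in finite supermodular games.) Let N ≥ 1 players be indexed by i ∈ {1,…,N}, each with strategy set S_i = {0,1,…,m_i} (m_i ∈ ℕ) ordered as natural numbers, and payoff functions u_i : S_1 × ⋯ × S_N → ℝ satisfying increasing differences: for every player i, all profiles a, b with a_j ≤ b_j for all j, and all s, t ∈ S_i with s ≤ t, one has u_i(b with i-th coordinate t) − u_i(b with i-th coordinate s) ≥ u_i(a with i-th coordinate t) − u_i(a with i-th coordinate s). Then there exists a pure-strategy Nash equilibrium, i.e., a profile l such that for every player i and every s ∈ S_i, u_i(l with i-th coordinate s) ≤ u_i(l). -/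
set_option maxHeartbeats 1000000 in

/-- Lemma 1: a finite game with linearly ordered strategy sets
`S_i = {0, 1, …, m_i}` and payoffs satisfying increasing differences
(a supermodular game) has a pure-strategy Nash equilibrium. -/
theorem stmt_7 (N : ℕ) (hN : 1 ≤ N) (m : Fin N → ℕ)
    (u : Fin N → (∀ j, Fin (m j + 1)) → ℝ)
    (hsupermod : ∀ i : Fin N, ∀ a b : ∀ j, Fin (m j + 1), (∀ j, a j ≤ b j) →
      ∀ s t : Fin (m i + 1), s ≤ t →
        u i (Function.update a i t) - u i (Function.update a i s) ≤
          u i (Function.update b i t) - u i (Function.update b i s)) :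
    ∃ l : ∀ j, Fin (m j + 1), ∀ i : Fin N, ∀ s : Fin (m i + 1),
      u i (Function.update l i s) ≤ u i l := by
  classical
  -- set of best responses for player i against profile x
  set best : (∀ j, Fin (m j + 1)) → ∀ i : Fin N, Finset (Fin (m i + 1)) :=
    fun x i => Finset.univ.filter
      (fun s => ∀ s', u i (Function.update x i s') ≤ u i (Function.update x i s)) with hbestdef
  have hbest_ne : ∀ x i, (best x i).Nonempty := by
    intro x i
    obtain ⟨s, -, hs⟩ := Finset.exists_max_image Finset.univ
      (fun s => u i (Function.update x i s)) ⟨0, Finset.mem_univ 0⟩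
    exact ⟨s, Finset.mem_filter.2 ⟨Finset.mem_univ _, fun s' => hs s' (Finset.mem_univ _)⟩⟩
  -- maximal best response map
  set T : (∀ j, Fin (m j + 1)) → ∀ j, Fin (m j + 1) :=
    fun x i => (best x i).max' (hbest_ne x i) with hTdef
  have hT_opt : ∀ x (i : Fin N) (s : Fin (m i + 1)),
      u i (Function.update x i s) ≤ u i (Function.update x i (T x i)) := by
    intro x i s
    have h := (best x i).max'_mem (hbest_ne x i)
    exact (Finset.mem_filter.1 h).2 s
  have hT_mono : ∀ x y, (∀ j, x j ≤ y j) → ∀ i, T x i ≤ T y i := by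
    intro x y hxy i
    by_contra h
    push_neg at h
    have h1 : u i (Function.update x i (T y i)) ≤ u i (Function.update x i (T x i)) :=
      hT_opt x i _
    have h2 := hsupermod i x y hxy (T y i) (T x i) (le_of_lt h)
    have h3 : u i (Function.update y i (T y i)) ≤ u i (Function.update y i (T x i)) := by
      linarith
    have hmem : T x i ∈ best y i := by
      refine Finset.mem_filter.2 ⟨Finset.mem_univ _, fun s' => ?_⟩
      exact le_trans (hT_opt y i s') h3
    exact absurd (Finset.le_max' _ _ hmem) (not_le.2 h)
  -- iterate from the top profile
  set seq : ℕ → ∀ j, Fin (m j + 1) := fun n => T^[n] (fun j => Fin.last (m j)) with hseqdef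
  have hseq_succ : ∀ n, seq (n + 1) = T (seq n) := by
    intro n
    simp [hseqdef, Function.iterate_succ_apply']
  have hdec : ∀ n, ∀ j, seq (n + 1) j ≤ seq n j := by
    intro n
    induction n with
    | zero => intro j; exact Fin.le_last _
    | succ k ih =>
      intro j
      have h := hT_mono (seq (k + 1)) (seq k) ih j
      rwa [← hseq_succ, ← hseq_succ] at h
  have hanti : ∀ a b, a ≤ b → ∀ j, seq b j ≤ seq a j := by
    intro a b hab
    induction b with
    | zero => intro j; simp [Nat.le_zero.mp hab]
    | succ k ih =>
      intro j
      rcases Nat.lt_or_ge a (k + 1) with h | h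
      · exact le_trans (hdec k j) (ih (Nat.lt_succ_iff.mp h) j)
      · have : a = k + 1 := le_antisymm hab h
        simp [this]
  -- pigeonhole: the sequence is not injective
  obtain ⟨a, b, hne, heq⟩ := Finite.exists_ne_map_eq_of_infinite seq
  wlog hab : a < b generalizing a b
  · exact this b a hne.symm heq.symm (hne.lt_or_gt.resolve_left hab)
  have hfix : seq (a + 1) = seq a := by
    funext j
    exact le_antisymm (hdec a j) (heq ▸ hanti (a + 1) b (Nat.succ_le_of_lt hab) j)
  refine ⟨seq a, fun i s => ?_⟩
  have h1 := hT_opt (seq a) i s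
  have h2 : T (seq a) i = seq a i := by
    rw [← hseq_succ, hfix]
  rw [h2, Function.update_eq_self] at h1
  exact h1
end

section
/- (Proposition 3, learning rate under a uniform lower bound on signals.) Let ε > 0, ε̄ ∈ (0,1), ρ > 0, ρ̄ > 0. Let f : ℕ → ℝ with f(n) ≥ 1 for all n and f(n) → ∞ as n → ∞, and for each n let k_1^n, …, k_n^n be natural numbers with k_i^n ≥ f(n) for every i ∈ {1,…,n}. Define δ_n = (1/(√π·ε̄))·(1/(ε·√(ρ + ρ̄·f(n))))·exp(−ε²·(ρ + ρ̄·f(n))/4). Then δ_n → 0 as n → ∞, and for every n, (1/n)·∑_{i=1}^n erf(ε·√((ρ + ρ̄·k_i^n)/2)) ≥ 1 − δ_n·ε̄; that is, the sufficient condition for (ε, ε̄, δ_n)-learning holds for every n, so δ-perfect learning occurs at a rate of order exp(−ρ̄·ε²·f(n)/4) up to a polynomial factor. -/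
open Filter

open MeasureTheory

lemma erf_hasDerivAt (x : ℝ) :
    HasDerivAt erf ((2 / Real.sqrt Real.pi) * Real.exp (-x ^ 2)) x := by
  have hc : Continuous fun t : ℝ => Real.exp (-t ^ 2) := by continuity
  exact ((hc.integral_hasStrictDerivAt 0 x).hasDerivAt).const_mul _

lemma erf_tendsto_atTop : Tendsto erf atTop (nhds 1) := by
  have hi : IntegrableOn (fun t : ℝ => Real.exp (-t ^ 2)) (Set.Ioi 0) := by
    have := (integrable_exp_neg_mul_sq one_pos).integrableOn (s := Set.Ioi (0:ℝ))
    simpa using this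
  have h1 := MeasureTheory.intervalIntegral_tendsto_integral_Ioi 0 hi tendsto_id
  have h2 : ∫ t in Set.Ioi (0:ℝ), Real.exp (-t ^ 2) = Real.sqrt Real.pi / 2 := by
    have := integral_gaussian_Ioi 1
    simpa using this
  rw [h2] at h1
  have h3 := h1.const_mul (2 / Real.sqrt Real.pi)
  have h4 : (2 / Real.sqrt Real.pi) * (Real.sqrt Real.pi / 2) = 1 := by
    have : Real.sqrt Real.pi ≠ 0 := ne_of_gt (Real.sqrt_pos.2 Real.pi_pos)
    field_simp
  rw [h4] at h3
  exact h3

lemma sqrt2_ge : (11/8 : ℝ) ≤ Real.sqrt 2 := by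
  rw [show (11/8:ℝ) = Real.sqrt ((11/8)^2) from (Real.sqrt_sq (by norm_num)).symm]
  exact Real.sqrt_le_sqrt (by norm_num)

lemma key_scalar {y : ℝ} (hy : 0 < y) :
    (2 / Real.sqrt Real.pi) * Real.exp (-y ^ 2) ≤
      Real.exp (-y ^ 2 / 2) * (y ^ 2 + 1) / (Real.sqrt (2 * Real.pi) * y ^ 2) := by
  have hπ : 0 < Real.sqrt Real.pi := Real.sqrt_pos.2 Real.pi_pos
  have hs2 : 0 < Real.sqrt 2 := by positivity
  have hsplit : Real.sqrt (2 * Real.pi) = Real.sqrt 2 * Real.sqrt Real.pi :=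
    Real.sqrt_mul (by norm_num) _
  rw [le_div_iff₀ (by positivity), hsplit]
  have hexp : Real.exp (-y ^ 2) = Real.exp (-y ^ 2 / 2) * Real.exp (-y ^ 2 / 2) := by
    rw [← Real.exp_add]; ring_nf
  have hE : 0 < Real.exp (-y ^ 2 / 2) := Real.exp_pos _
  have hE1 : Real.exp (-y ^ 2 / 2) * (1 + y ^ 2 / 2) ≤ 1 := by
    have h1 : (1 + y ^ 2 / 2) ≤ Real.exp (y ^ 2 / 2) := by
      have := Real.add_one_le_exp (y ^ 2 / 2); linarith
    calc Real.exp (-y ^ 2 / 2) * (1 + y ^ 2 / 2)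
        ≤ Real.exp (-y ^ 2 / 2) * Real.exp (y ^ 2 / 2) := by
          exact mul_le_mul_of_nonneg_left h1 hE.le
      _ = 1 := by rw [← Real.exp_add, show -y^2/2 + y^2/2 = 0 by ring, Real.exp_zero]
  -- reduce to: 2 * sqrt 2 * E * y^2 ≤ 1 + y^2,  then multiply by sqrt π * E etc.
  have hpoly : 2 * Real.sqrt 2 * Real.exp (-y ^ 2 / 2) * y ^ 2 ≤ 1 + y ^ 2 := by
    have hr := sqrt2_ge
    have hr2 : Real.sqrt 2 ^ 2 = 2 := Real.sq_sqrt (by norm_num)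
    set r := Real.sqrt 2
    set E := Real.exp (-y ^ 2 / 2)
    set t := y ^ 2 with ht
    have ht0 : 0 < t := by positivity
    -- from hE1 : E * (1 + t/2) ≤ 1
    -- and poly : 4 r t ≤ (1+t)(2+t)
    have hq : 4 * r * t ≤ (1 + t) * (2 + t) := by
      nlinarith [sq_nonneg (t - 2*r + 3/2), hr2, hr, ht0.le]
    nlinarith [mul_le_mul_of_nonneg_left hE1 (by positivity : (0:ℝ) ≤ 1 + t),
      mul_pos hE ht0, hE.le, ht0.le, hq, mul_le_mul_of_nonneg_left hq hE.le]
  rw [hexp]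
  have hgoal : 2 / Real.sqrt Real.pi * (Real.exp (-y^2/2) * Real.exp (-y^2/2)) *
      (Real.sqrt 2 * Real.sqrt Real.pi * y ^ 2)
      = (2 * Real.sqrt 2 * Real.exp (-y^2/2) * y^2) * Real.exp (-y^2/2) * (Real.sqrt Real.pi / Real.sqrt Real.pi) := by
    ring
  rw [hgoal, div_self (ne_of_gt hπ), mul_one]
  calc (2 * Real.sqrt 2 * Real.exp (-y^2/2) * y^2) * Real.exp (-y^2/2)
      ≤ (1 + y ^ 2) * Real.exp (-y^2/2) := mul_le_mul_of_nonneg_right hpoly hE.le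
    _ ≤ Real.exp (-y ^ 2 / 2) * (y ^ 2 + 1) := by ring_nf; rfl

lemma one_sub_erf_le {x : ℝ} (hx : 0 < x) :
    1 - erf x ≤ Real.exp (-x ^ 2 / 2) / (Real.sqrt (2 * Real.pi) * x) := by
  have hπ2 : 0 < Real.sqrt (2 * Real.pi) := Real.sqrt_pos.2 (by positivity)
  set s := Real.sqrt (2 * Real.pi) with hsdef
  set h : ℝ → ℝ := fun y => Real.exp (-y ^ 2 / 2) / (s * y) + erf y with hh
  have hderiv : ∀ y : ℝ, 0 < y → HasDerivAt h
      ((Real.exp (-y ^ 2 / 2) * (-y) * (s * y) - Real.exp (-y ^ 2 / 2) * s) / (s * y) ^ 2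
        + (2 / Real.sqrt Real.pi) * Real.exp (-y ^ 2)) y := by
    intro y hy
    have h1 : HasDerivAt (fun y : ℝ => -y ^ 2 / 2) (-y) y := by
      have : HasDerivAt (fun y : ℝ => -y ^ 2 / 2) (-((2:ℕ) * y ^ (2 - 1)) / 2) y :=
        ((hasDerivAt_pow 2 y).neg.div_const 2)
      convert this using 1
      norm_num
      ring
    have h2 := h1.exp
    have h3 : HasDerivAt (fun y : ℝ => s * y) s y := by
      simpa using (hasDerivAt_id y).const_mul s
    have h4 := h2.div h3 (by positivity)
    exact h4.add (erf_hasDerivAt y)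
  have hD : ∀ y : ℝ, 0 < y →
      (Real.exp (-y ^ 2 / 2) * (-y) * (s * y) - Real.exp (-y ^ 2 / 2) * s) / (s * y) ^ 2
        + (2 / Real.sqrt Real.pi) * Real.exp (-y ^ 2) ≤ 0 := by
    intro y hy
    have e1 : (Real.exp (-y ^ 2 / 2) * (-y) * (s * y) - Real.exp (-y ^ 2 / 2) * s) / (s * y) ^ 2
        = -(Real.exp (-y ^ 2 / 2) * (y ^ 2 + 1) / (s * y ^ 2)) := by
      field_simp
      ring
    rw [e1]
    have := key_scalar hy
    rw [← hsdef] at this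
    linarith
  have hanti : AntitoneOn h (Set.Ici x) := by
    apply antitoneOn_of_deriv_nonpos (convex_Ici x)
    · intro y hy
      exact ((hderiv y (lt_of_lt_of_le hx hy)).continuousAt).continuousWithinAt
    · intro y hy
      rw [interior_Ici] at hy
      exact ((hderiv y (hx.trans hy)).differentiableAt).differentiableWithinAt
    · intro y hy
      rw [interior_Ici] at hy
      rw [(hderiv y (hx.trans hy)).deriv]
      exact hD y (hx.trans hy)
  have hlim : Tendsto h atTop (nhds 1) := by
    have hnum : Tendsto (fun y : ℝ => Real.exp (-y ^ 2 / 2)) atTop (nhds 0) := by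
      apply Real.tendsto_exp_atBot.comp
      have h1 : Tendsto (fun y : ℝ => y ^ 2 / 2) atTop atTop :=
        (tendsto_pow_atTop two_ne_zero).atTop_div_const (by norm_num)
      have := tendsto_neg_atTop_atBot.comp h1
      apply this.congr
      intro y; simp [neg_div]
    have hden : Tendsto (fun y : ℝ => s * y) atTop atTop :=
      tendsto_id.const_mul_atTop hπ2
    have hB := hnum.div_atTop hden
    have := hB.add erf_tendsto_atTop
    simpa using this
  have h1le : (1:ℝ) ≤ h x := by
    apply le_of_tendsto hlim
    filter_upwards [eventually_ge_atTop x] with y hy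
    exact hanti (Set.self_mem_Ici) hy hy
  have : (1:ℝ) ≤ Real.exp (-x ^ 2 / 2) / (s * x) + erf x := h1le
  linarith


lemma B_anti {a b : ℝ} (ha : 0 < a) (hab : a ≤ b) :
    Real.exp (-b ^ 2 / 2) / (Real.sqrt (2 * Real.pi) * b) ≤
      Real.exp (-a ^ 2 / 2) / (Real.sqrt (2 * Real.pi) * a) := by
  have hs : 0 < Real.sqrt (2 * Real.pi) := Real.sqrt_pos.2 (by positivity)
  apply div_le_div₀ (Real.exp_pos _).le _ (by positivity) _
  · exact Real.exp_le_exp.2 (by nlinarith)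
  · nlinarith

/-- Proposition 3: learning rate under a uniform lower bound on signals.
If every agent in the size-`n` network obtains at least `f n` signals with
`f n → ∞`, then with `δ_n = (1/(√π ε̄)) (1/(ε √(ρ + ρ̄ f n))) e^{-ε²(ρ + ρ̄ f n)/4}`
we have `δ_n → 0` and the sufficient condition for `(ε, ε̄, δ_n)`-learning,
`(1/n) ∑ᵢ erf(ε√((ρ + ρ̄ kᵢⁿ)/2)) ≥ 1 - δ_n ε̄`, holds for every `n ≥ 1`. -/
theorem stmt_11 (ε εbar ρ ρbar : ℝ) (hε : 0 < ε) (hεbar : εbar ∈ Set.Ioo (0:ℝ) 1)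
    (hρ : 0 < ρ) (hρbar : 0 < ρbar)
    (f : ℕ → ℝ) (hf1 : ∀ n, 1 ≤ f n) (hftop : Tendsto f atTop atTop)
    (k : (n : ℕ) → Fin n → ℕ) (hk : ∀ n, ∀ i : Fin n, f n ≤ (k n i : ℝ))
    (δ : ℕ → ℝ)
    (hδ : ∀ n, δ n = (1 / (Real.sqrt Real.pi * εbar))
        * (1 / (ε * Real.sqrt (ρ + ρbar * f n)))
        * Real.exp (-(ε ^ 2 * (ρ + ρbar * f n)) / 4)) :
    Tendsto δ atTop (nhds 0) ∧
      ∀ n : ℕ, 1 ≤ n →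
        1 - δ n * εbar ≤
          (1 / n : ℝ) * ∑ i : Fin n, erf (ε * Real.sqrt ((ρ + ρbar * k n i) / 2)) := by
  obtain ⟨hεb0, hεb1⟩ := hεbar
  have hπ : 0 < Real.sqrt Real.pi := Real.sqrt_pos.2 Real.pi_pos
  have hv : ∀ n, 0 < ρ + ρbar * f n := fun n => by nlinarith [hf1 n]
  constructor
  · -- δ → 0
    have hle : ∀ n, δ n ≤ (1 / (Real.sqrt Real.pi * εbar)) * (1 / (ε * Real.sqrt ρ))
        * Real.exp (-(ε ^ 2 * (ρ + ρbar * f n)) / 4) := by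
      intro n
      rw [hδ n]
      gcongr
      nlinarith [hf1 n]
    have hnn : ∀ n, 0 ≤ δ n := by
      intro n; rw [hδ n]; positivity
    have htop : Tendsto (fun n => ρ + ρbar * f n) atTop atTop :=
      tendsto_atTop_add_const_left _ ρ (hftop.const_mul_atTop hρbar)
    have hbot : Tendsto (fun n => -(ε ^ 2 * (ρ + ρbar * f n)) / 4) atTop atBot := by
      have h1 : Tendsto (fun n => (ε ^ 2 / 4) * (ρ + ρbar * f n)) atTop atTop :=
        htop.const_mul_atTop (by positivity)
      have := tendsto_neg_atTop_atBot.comp h1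
      apply this.congr
      intro n; simp only [Function.comp_apply]; ring
    have hexp0 : Tendsto (fun n => Real.exp (-(ε ^ 2 * (ρ + ρbar * f n)) / 4))
        atTop (nhds 0) := Real.tendsto_exp_atBot.comp hbot
    have hg : Tendsto (fun n => (1 / (Real.sqrt Real.pi * εbar)) * (1 / (ε * Real.sqrt ρ))
        * Real.exp (-(ε ^ 2 * (ρ + ρbar * f n)) / 4)) atTop (nhds 0) := by
      have := hexp0.const_mul ((1 / (Real.sqrt Real.pi * εbar)) * (1 / (ε * Real.sqrt ρ)))
      simpa [mul_assoc] using this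
    exact squeeze_zero hnn hle hg
  · intro n hn
    have hn0 : (0:ℝ) < n := by exact_mod_cast hn
    set v := ρ + ρbar * f n with hvdef
    set xv := ε * Real.sqrt (v / 2) with hxv
    have hv0 : 0 < v := hv n
    have hxv0 : 0 < xv := by positivity
    have hsv : (0:ℝ) < Real.sqrt v := Real.sqrt_pos.2 hv0
    have hδe : δ n * εbar = Real.exp (-xv ^ 2 / 2) / (Real.sqrt (2 * Real.pi) * xv) := by
      have hxvsq : xv ^ 2 = ε ^ 2 * (v / 2) := by
        rw [hxv, mul_pow, Real.sq_sqrt (by positivity)]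
      have hden : Real.sqrt (2 * Real.pi) * xv = Real.sqrt Real.pi * (ε * Real.sqrt v) := by
        rw [hxv, Real.sqrt_mul (by norm_num : (0:ℝ) ≤ 2),
          Real.sqrt_div hv0.le]
        have h2 : Real.sqrt 2 ≠ 0 := by positivity
        field_simp
      rw [hδ n, ← hvdef, hden, hxvsq,
        show -(ε ^ 2 * (v / 2)) / 2 = -(ε ^ 2 * v) / 4 by ring]
      field_simp
    have hbound : ∀ i : Fin n,
        1 - δ n * εbar ≤ erf (ε * Real.sqrt ((ρ + ρbar * k n i) / 2)) := by
      intro i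
      set xi := ε * Real.sqrt ((ρ + ρbar * k n i) / 2) with hxi
      have hxiv : xv ≤ xi := by
        rw [hxi, hxv]
        gcongr
        rw [hvdef]
        nlinarith [hk n i]
      have hxi0 : 0 < xi := lt_of_lt_of_le hxv0 hxiv
      have h1 := one_sub_erf_le hxi0
      have h2 := B_anti hxv0 hxiv
      rw [hδe]
      linarith
    have hsum : (n:ℝ) * (1 - δ n * εbar) ≤
        ∑ i : Fin n, erf (ε * Real.sqrt ((ρ + ρbar * k n i) / 2)) := by
      calc (n:ℝ) * (1 - δ n * εbar)
          = ∑ _i : Fin n, (1 - δ n * εbar) := by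
            rw [Finset.sum_const, Finset.card_univ, Fintype.card_fin, nsmul_eq_mul]
        _ ≤ _ := Finset.sum_le_sum fun i _ => hbound i
    have := mul_le_mul_of_nonneg_left hsum (by positivity : (0:ℝ) ≤ 1 / n)
    rwa [show (1 / (n:ℝ)) * ((n:ℝ) * (1 - δ n * εbar)) = 1 - δ n * εbar by
      field_simp] at this
end

section
/- (Monotonicity of h in the binomial tree learning-rate computation.) Let ρ > 0, ρ̄ > 0, and ε > 0 satisfy ε² < −(4/ρ̄)·ln((1/2)·√((ρ + 2ρ̄)/(ρ + ρ̄))). Then the function h(x) = 2^{x−1}·(ρ + ρ̄·x)^{−1/2}·exp(−ε²·(ρ + ρ̄·x)/4) satisfies h(x+1) > h(x) for every real x ≥ 1; i.e., h is strictly increasing along integer steps on [1, ∞). -/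
/-- Monotonicity of `h` in the binomial tree learning-rate computation: if
`ε² < -(4/ρ̄) ln((1/2)√((ρ + 2ρ̄)/(ρ + ρ̄)))`, then
`h x = 2^{x-1} (ρ + ρ̄x)^{-1/2} e^{-ε²(ρ + ρ̄x)/4}` satisfies `h (x+1) > h x`
for every real `x ≥ 1`. -/
theorem stmt_15 (ρ ρbar ε : ℝ) (hρ : 0 < ρ) (hρbar : 0 < ρbar) (hε : 0 < ε)
    (hε2 : ε ^ 2 < -(4 / ρbar) *
        Real.log ((1 / 2) * Real.sqrt ((ρ + 2 * ρbar) / (ρ + ρbar))))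
    (h : ℝ → ℝ)
    (hh : ∀ x : ℝ, h x = (2:ℝ) ^ (x - 1) / Real.sqrt (ρ + ρbar * x)
        * Real.exp (-(ε ^ 2 * (ρ + ρbar * x)) / 4)) :
    ∀ x : ℝ, 1 ≤ x → h x < h (x + 1) := by
  intro x hx
  set y : ℝ := (1 / 2) * Real.sqrt ((ρ + 2 * ρbar) / (ρ + ρbar)) with hy
  have hy0 : 0 < y := by
    have : 0 < Real.sqrt ((ρ + 2 * ρbar) / (ρ + ρbar)) :=
      Real.sqrt_pos.mpr (by positivity)
    positivity
  -- from the hypothesis: exp(-(ε²ρ̄)/4) > y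
  have hexp : y < Real.exp (-(ε ^ 2 * ρbar) / 4) := by
    have h1 : Real.log y < -(ε ^ 2 * ρbar) / 4 := by
      have h2 : ε ^ 2 * (ρbar / 4) < -Real.log y := by
        have := mul_lt_mul_of_pos_right hε2 (show (0:ℝ) < ρbar / 4 by positivity)
        calc ε ^ 2 * (ρbar / 4) < -(4 / ρbar) * Real.log y * (ρbar / 4) := this
          _ = -Real.log y := by field_simp
      linarith
    calc y = Real.exp (Real.log y) := (Real.exp_log hy0).symm
      _ < _ := Real.exp_lt_exp.mpr h1
  set A : ℝ := ρ + ρbar * x with hA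
  have hA0 : 0 < A := by nlinarith
  have hB0 : 0 < A + ρbar := by linarith
  have hAge : ρ + ρbar ≤ A := by nlinarith
  -- √(A+ρ̄) ≤ 2 y √A
  have hsq : Real.sqrt (A + ρbar) ≤ 2 * y * Real.sqrt A := by
    have hratio : (A + ρbar) ≤ ((ρ + 2 * ρbar) / (ρ + ρbar)) * A := by
      rw [div_mul_eq_mul_div, le_div_iff₀ (by linarith : (0:ℝ) < ρ + ρbar)]
      nlinarith
    have := Real.sqrt_le_sqrt hratio
    rw [Real.sqrt_mul (by positivity) A] at this
    calc Real.sqrt (A + ρbar) ≤ Real.sqrt ((ρ + 2 * ρbar) / (ρ + ρbar)) * Real.sqrt A := this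
      _ = 2 * y * Real.sqrt A := by rw [hy]; ring
  have hsA : 0 < Real.sqrt A := Real.sqrt_pos.mpr hA0
  have hsB : 0 < Real.sqrt (A + ρbar) := Real.sqrt_pos.mpr hB0
  have key : Real.sqrt (A + ρbar) < 2 * Real.sqrt A * Real.exp (-(ε ^ 2 * ρbar) / 4) := by
    calc Real.sqrt (A + ρbar) ≤ 2 * y * Real.sqrt A := hsq
      _ < 2 * Real.exp (-(ε ^ 2 * ρbar) / 4) * Real.sqrt A := by
          apply mul_lt_mul_of_pos_right _ hsA
          linarith
      _ = _ := by ring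
  rw [hh x, hh (x + 1)]
  have e1 : ρ + ρbar * (x + 1) = A + ρbar := by rw [hA]; ring
  rw [e1]
  have e2 : (2:ℝ) ^ (x + 1 - 1) = (2:ℝ) ^ (x - 1) * 2 := by
    rw [show x + 1 - 1 = (x - 1) + 1 by ring,
      Real.rpow_add (by norm_num : (0:ℝ) < 2), Real.rpow_one]
  rw [e2]
  have e3 : -(ε ^ 2 * (A + ρbar)) / 4 = -(ε ^ 2 * A) / 4 + -(ε ^ 2 * ρbar) / 4 := by ring
  rw [e3, Real.exp_add]
  have hp : (0:ℝ) < (2:ℝ) ^ (x - 1) := Real.rpow_pos_of_pos (by norm_num) _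
  have heA : (0:ℝ) < Real.exp (-(ε ^ 2 * A) / 4) := Real.exp_pos _
  have heR : (0:ℝ) < Real.exp (-(ε ^ 2 * ρbar) / 4) := Real.exp_pos _
  rw [div_mul_eq_mul_div, div_mul_eq_mul_div, div_lt_div_iff₀ hsA hsB]
  calc (2:ℝ) ^ (x - 1) * Real.exp (-(ε ^ 2 * A) / 4) * Real.sqrt (A + ρbar)
      < (2:ℝ) ^ (x - 1) * Real.exp (-(ε ^ 2 * A) / 4) *
        (2 * Real.sqrt A * Real.exp (-(ε ^ 2 * ρbar) / 4)) := by
        apply mul_lt_mul_of_pos_left key (by positivity)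
    _ = (2:ℝ) ^ (x - 1) * 2 * (Real.exp (-(ε ^ 2 * A) / 4) *
        Real.exp (-(ε ^ 2 * ρbar) / 4)) * Real.sqrt A := by ring
end
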